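/- Let (α, T, N, B, κ, τ) be a timelike Frenet curve in E₁³ with κ and τ twice differentiable, and define the Darboux curve W(s) = −τ(s)·T(s) − κ(s)·B(s). If W'' is everywhere proportional to the normal, i.e. there is a function μ : ℝ → ℝ with W''(s) = μ(s)·N(s) for all s, then κ'' ≡ 0 and τ'' ≡ 0, so there exist constants a, b, c, d ∈ ℝ with κ(s) = a·s + b and τ(s) = c·s + d for all s; that is, α is an Euler spiral in E₁³. -/

import Mathlib

/-- The Minkowski bilinear form on ℝ³: `⟨x,y⟩ = −x₀y₀ + x₁y₁ + x₂y₂`. -/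
def mink (x y : Fin 3 → ℝ) : ℝ := -(x 0 * y 0) + x 1 * y 1 + x 2 * y 2

lemma mink_comb (a b c : ℝ) (x y z w : Fin 3 → ℝ) :
    mink (a • x + b • y - c • z) w = a * mink x w + b * mink y w - c * mink z w := by
  simp [mink, Pi.smul_apply, smul_eq_mul]; ring

lemma mink_smul (a : ℝ) (x w : Fin 3 → ℝ) : mink (a • x) w = a * mink x w := by
  simp [mink, Pi.smul_apply, smul_eq_mul]; ring

lemma mink_symm (x y : Fin 3 → ℝ) : mink x y = mink y x := by
  simp [mink]; ring

lemma affine_of_deriv2 (f f' f'' : ℝ → ℝ) (hf : ∀ s, HasDerivAt f (f' s) s)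
    (hf' : ∀ s, HasDerivAt f' (f'' s) s) (h0 : ∀ s, f'' s = 0) :
    ∀ s, f s = f' 0 * s + f 0 := by
  have hc : ∀ s, f' s = f' 0 := by
    intro s
    have : ∀ x, deriv f' x = 0 := fun x => by rw [(hf' x).deriv, h0]
    exact is_const_of_deriv_eq_zero (fun x => (hf' x).differentiableAt) this s 0
  intro s
  have hg : ∀ x, HasDerivAt (fun t => f t - f' 0 * t) 0 x := by
    intro x
    have := (hf x).sub ((hasDerivAt_id x).const_mul (f' 0))
    refine this.congr_deriv ?_
    simp [hc x]
  have := is_const_of_deriv_eq_zero (f := fun t => f t - f' 0 * t)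
    (fun x => (hg x).differentiableAt) (fun x => (hg x).deriv) s 0
  simp at this
  linarith

/-- For a timelike Frenet curve `(α, T, N, B, κ, τ)` in `E₁³` with `κ, τ` twice
differentiable, if the second derivative of the Darboux curve
`W(s) = −τ(s)·T(s) − κ(s)·B(s)` is everywhere proportional to the normal
(`W'' = μ·N`), then `κ'' ≡ 0` and `τ'' ≡ 0`, so `κ` and `τ` are affine functions
of arc length: `α` is an Euler spiral in `E₁³`. -/
theorem darboux_geodesic_implies_euler_spiral_timelike
    (α T N B : ℝ → Fin 3 → ℝ) (κ τ κ' τ' κ'' τ'' : ℝ → ℝ)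
    (hα : ∀ s, HasDerivAt α (T s) s)
    (hT : ∀ s, HasDerivAt T (κ s • N s) s)
    (hN : ∀ s, HasDerivAt N (κ s • T s + τ s • B s) s)
    (hB : ∀ s, HasDerivAt B (-τ s • N s) s)
    (hTT : ∀ s, mink (T s) (T s) = -1)
    (hNN : ∀ s, mink (N s) (N s) = 1)
    (hBB : ∀ s, mink (B s) (B s) = 1)
    (hTN : ∀ s, mink (T s) (N s) = 0)
    (hTB : ∀ s, mink (T s) (B s) = 0)
    (hNB : ∀ s, mink (N s) (B s) = 0)
    (hκ' : ∀ s, HasDerivAt κ (κ' s) s) (hτ' : ∀ s, HasDerivAt τ (τ' s) s)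
    (hκ'' : ∀ s, HasDerivAt κ' (κ'' s) s) (hτ'' : ∀ s, HasDerivAt τ' (τ'' s) s)
    (W : ℝ → Fin 3 → ℝ) (hW : ∀ s : ℝ, W s = -τ s • T s - κ s • B s)
    (μ : ℝ → ℝ) (hμ : ∀ s : ℝ, deriv (deriv W) s = μ s • N s) :
    (∀ s : ℝ, κ'' s = 0) ∧ (∀ s : ℝ, τ'' s = 0) ∧
      ∃ a b c d : ℝ, ∀ s : ℝ, κ s = a * s + b ∧ τ s = c * s + d := by
  have hWe : W = fun s => -τ s • T s - κ s • B s := funext hW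
  subst hWe
  -- first derivative
  have hW1 : ∀ s, HasDerivAt (fun s => -τ s • T s - κ s • B s)
      (-τ' s • T s - κ' s • B s) s := by
    intro s
    have h1 := ((hτ' s).neg.smul (hT s)).sub ((hκ' s).smul (hB s))
    refine HasDerivAt.congr_deriv h1 ?_
    funext i
    simp [Pi.smul_apply, smul_eq_mul]
    ring
  have hd1 : deriv (fun s => -τ s • T s - κ s • B s)
      = fun s => -τ' s • T s - κ' s • B s := funext fun s => (hW1 s).deriv
  rw [hd1] at hμ
  -- second derivative
  have hW2 : ∀ s, HasDerivAt (fun s => -τ' s • T s - κ' s • B s)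
      (-τ'' s • T s + (κ' s * τ s - τ' s * κ s) • N s - κ'' s • B s) s := by
    intro s
    have h2 := ((hτ'' s).neg.smul (hT s)).sub ((hκ'' s).smul (hB s))
    refine HasDerivAt.congr_deriv h2 ?_
    funext i
    simp [Pi.smul_apply, smul_eq_mul]
    ring
  have key : ∀ s : ℝ,
      -τ'' s • T s + (κ' s * τ s - τ' s * κ s) • N s - κ'' s • B s = μ s • N s := by
    intro s
    rw [← (hW2 s).deriv]
    exact hμ s
  have hτ0 : ∀ s, τ'' s = 0 := by
    intro s
    have h := congrArg (fun v => mink v (T s)) (key s)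
    simp only [mink_comb, mink_smul] at h
    rw [hTT s, mink_symm (N s) (T s), hTN s, mink_symm (B s) (T s), hTB s] at h
    linarith
  have hκ0 : ∀ s, κ'' s = 0 := by
    intro s
    have h := congrArg (fun v => mink v (B s)) (key s)
    simp only [mink_comb, mink_smul] at h
    rw [hBB s, hTB s, hNB s] at h
    linarith
  refine ⟨hκ0, hτ0, κ' 0, κ 0, τ' 0, τ 0, fun s => ?_⟩
  exact ⟨affine_of_deriv2 κ κ' κ'' hκ' hκ'' hκ0 s,
         affine_of_deriv2 τ τ' τ'' hτ' hτ'' hτ0 s⟩
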